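/- Let E ⊆ ℕ have positive natural density d(E) > 0, let b : ℕ → ℕ enumerate E in increasing order, and let c : ℕ → ℂ be a bounded sequence. If the Cesàro limit lim_{N→∞} (1/N) ∑_{n=1}^N c(n)·1_E(n) exists and equals L, then lim_{N→∞} (1/N) ∑_{n=1}^N c(b(n)) exists and equals L/d(E). -/

import Mathlib

open Filter

lemma sum_enum (E : Set ℕ) (b : ℕ → ℕ) (hb : StrictMono b) (hrange : Set.range b = E)
    {M : Type*} [AddCommMonoid M] (f : ℕ → M) (N : ℕ) (hN : 1 ≤ N) :
    ∑ n ∈ Finset.range N, f (b n)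
      = E.indicator f 0 + ∑ n ∈ Finset.Icc 1 (b (N-1)), E.indicator f n := by
  classical
  have hfilter : (Finset.range (b (N-1)+1)).filter (· ∈ E) = (Finset.range N).image b := by
    ext m
    simp only [Finset.mem_filter, Finset.mem_image, Finset.mem_range]
    constructor
    · rintro ⟨hlt, hm⟩
      rw [← hrange] at hm
      obtain ⟨k, rfl⟩ := hm
      refine ⟨k, ?_, rfl⟩
      have : b k ≤ b (N-1) := by omega
      have := hb.le_iff_le.mp this
      omega
    · rintro ⟨k, hk, rfl⟩
      have : b k ≤ b (N-1) := hb.monotone (by omega)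
      refine ⟨by omega, ?_⟩
      rw [← hrange]; exact ⟨k, rfl⟩
  have h1 : ∑ n ∈ Finset.range (b (N-1)+1), E.indicator f n
      = ∑ n ∈ Finset.range N, f (b n) := by
    rw [show (∑ n ∈ Finset.range (b (N-1)+1), E.indicator f n)
        = ∑ n ∈ (Finset.range (b (N-1)+1)).filter (· ∈ E), f n by
      rw [Finset.sum_filter]
      exact Finset.sum_congr rfl fun n _ => (Set.indicator_apply E f n).symm ▸ rfl]
    rw [hfilter, Finset.sum_image (fun x _ y _ h => hb.injective h)]
  rw [← h1]
  have h2 : Finset.range (b (N-1)+1) = Finset.cons 0 (Finset.Icc 1 (b (N-1)))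
      (by simp) := by
    ext m
    simp only [Finset.mem_range, Finset.mem_cons, Finset.mem_Icc]
    omega
  rw [h2, Finset.sum_cons]

/-- If `E ⊆ ℕ` has positive natural density `dE`, `b` enumerates `E` in
increasing order, `c` is bounded, and `(1/N) ∑_{n≤N} c(n)·1_E(n) → L`, then
`(1/N) ∑_{n≤N} c(b(n)) → L / dE`. -/
theorem stmt13 (E : Set ℕ) (dE : ℝ) (hdE : 0 < dE)
    (hdens : Tendsto
      (fun N : ℕ => (∑ n ∈ Finset.Icc 1 N, Set.indicator E (fun _ => (1:ℝ)) n) / (N : ℝ))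
      atTop (nhds dE))
    (b : ℕ → ℕ) (hb : StrictMono b) (hrange : Set.range b = E)
    (c : ℕ → ℂ) (C : ℝ) (hc : ∀ n, ‖c n‖ ≤ C)
    (L : ℂ)
    (hlim : Tendsto (fun N : ℕ => (∑ n ∈ Finset.Icc 1 N, Set.indicator E c n) / (N : ℂ))
      atTop (nhds L)) :
    Tendsto (fun N : ℕ => (∑ n ∈ Finset.range N, c (b n)) / (N : ℂ))
      atTop (nhds (L / (dE : ℂ))) := by
  classical
  have hbTop : Tendsto (fun N : ℕ => b (N - 1)) atTop atTop :=
    hb.tendsto_atTop.comp (tendsto_sub_atTop_nat 1)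
  set ε : ℝ := E.indicator (fun _ => (1:ℝ)) 0 with hεdef
  set e : ℂ := E.indicator c 0 with hedef
  have hε01 : ε = 0 ∨ ε = 1 := by
    by_cases h : (0:ℕ) ∈ E
    · right; simp [hεdef, h]
    · left; simp [hεdef, h]
  -- count identity
  have hcount : ∀ N : ℕ, 1 ≤ N →
      (∑ n ∈ Finset.Icc 1 (b (N-1)), Set.indicator E (fun _ => (1:ℝ)) n) = (N : ℝ) - ε := by
    intro N hN
    have h := sum_enum E b hb hrange (fun _ => (1:ℝ)) N hN
    simp only [Finset.sum_const, Finset.card_range, nsmul_eq_mul, mul_one] at h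
    rw [← hεdef] at h
    linarith
  have hsum : ∀ N : ℕ, 1 ≤ N →
      ∑ n ∈ Finset.range N, c (b n) = e + ∑ n ∈ Finset.Icc 1 (b (N-1)), E.indicator c n :=
    fun N hN => sum_enum E b hb hrange c N hN
  -- composed limits
  have h1 : Tendsto (fun N : ℕ =>
      (∑ n ∈ Finset.Icc 1 (b (N-1)), Set.indicator E c n) / ((b (N-1) : ℕ) : ℂ))
      atTop (nhds L) := hlim.comp hbTop
  have h2 : Tendsto (fun N : ℕ =>
      (∑ n ∈ Finset.Icc 1 (b (N-1)), Set.indicator E (fun _ => (1:ℝ)) n) / ((b (N-1) : ℕ) : ℝ))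
      atTop (nhds dE) := hdens.comp hbTop
  have hA : Tendsto (fun N : ℕ => ((N : ℝ) - ε) / ((b (N-1) : ℕ) : ℝ)) atTop (nhds dE) := by
    apply h2.congr'
    filter_upwards [eventually_ge_atTop 1] with N hN
    rw [hcount N hN]
  have hAinv : Tendsto (fun N : ℕ => ((b (N-1) : ℕ) : ℝ) / ((N : ℝ) - ε)) atTop (nhds dE⁻¹) := by
    have := hA.inv₀ hdE.ne'
    simpa [inv_div] using this
  have hfrac : Tendsto (fun N : ℕ => ((N : ℝ) - ε) / (N : ℝ)) atTop (nhds 1) := by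
    have h0 : Tendsto (fun N : ℕ => 1 - ε / (N : ℝ)) atTop (nhds (1 - 0)) :=
      tendsto_const_nhds.sub (tendsto_const_div_atTop_nhds_zero_nat ε)
    rw [sub_zero] at h0
    apply h0.congr'
    filter_upwards [eventually_ge_atTop 1] with N hN
    have hN0 : (N : ℝ) ≠ 0 := by positivity
    field_simp
  have hr : Tendsto (fun N : ℕ => ((b (N-1) : ℕ) : ℝ) / (N : ℝ)) atTop (nhds dE⁻¹) := by
    have := hAinv.mul hfrac
    rw [mul_one] at this
    apply this.congr'
    filter_upwards [eventually_ge_atTop 2] with N hN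
    have hNε : (N : ℝ) - ε ≠ 0 := by
      have h2N : (2:ℝ) ≤ (N:ℝ) := by exact_mod_cast hN
      rcases hε01 with h | h <;> rw [h] <;> intro hcon <;> linarith
    exact div_mul_div_cancel₀ hNε
  have hrC : Tendsto (fun N : ℕ => Complex.ofReal (((b (N-1) : ℕ) : ℝ) / (N : ℝ))) atTop
      (nhds ((dE⁻¹ : ℝ) : ℂ)) := (Complex.continuous_ofReal.tendsto _).comp hr
  have he0 : Tendsto (fun N : ℕ => e / (N : ℂ)) atTop (nhds 0) := by
    have hinv : Tendsto (fun N : ℕ => ((N : ℂ))⁻¹) atTop (nhds 0) := by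
      have : Tendsto (fun N : ℕ => (((N : ℝ)⁻¹ : ℝ) : ℂ)) atTop (nhds ((0:ℝ):ℂ)) :=
        (Complex.continuous_ofReal.tendsto _).comp
          (tendsto_inv_atTop_zero.comp tendsto_natCast_atTop_atTop)
      simpa using this
    have := hinv.const_mul e
    rw [mul_zero] at this
    apply this.congr
    intro N
    rw [div_eq_mul_inv]
  have hmain := he0.add (h1.mul hrC)
  have hval : (0:ℂ) + L * ((dE⁻¹ : ℝ) : ℂ) = L / (dE : ℂ) := by
    push_cast
    field_simp
    rw [zero_add]
  rw [hval] at hmain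
  apply hmain.congr'
  have hbge : ∀ᶠ N : ℕ in atTop, 1 ≤ b (N - 1) := hbTop.eventually_ge_atTop 1
  filter_upwards [eventually_ge_atTop 2, hbge] with N hN hbN
  have hbc : ((b (N-1) : ℕ) : ℂ) ≠ 0 := Nat.cast_ne_zero.mpr (by omega)
  have hNc : ((N : ℕ) : ℂ) ≠ 0 := Nat.cast_ne_zero.mpr (by omega)
  show e / (N : ℂ) + (∑ n ∈ Finset.Icc 1 (b (N-1)), E.indicator c n) / ((b (N-1) : ℕ) : ℂ)
      * Complex.ofReal (((b (N-1) : ℕ) : ℝ) / (N : ℝ))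
      = (∑ n ∈ Finset.range N, c (b n)) / (N : ℂ)
  rw [hsum N (by omega), add_div]
  congr 1
  push_cast
  rw [div_mul_div_cancel₀ hbc]
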